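/- Suppose the index set 𝒜 ⊆ {0,…,N−1} and the minimum-weight index set ℳ = { i ∈ 𝒜 : w(g_i) = w_min } satisfy: for every i ∈ ℳ there is no j ∈ 𝒜ᶜ with j > i (i.e., every index above min(ℳ) is in 𝒜). Then the polar code { v·P_n : supp(v) ⊆ 𝒜 } and the PAC code { v·G·P_n : supp(v) ⊆ 𝒜 } have the same number of minimum-weight codewords. -/

import Mathlib

open Matrix

/-- The 2×2 polar kernel `P = [[1,0],[1,1]]` over GF(2). -/
def Pmat : Matrix (Fin 2) (Fin 2) (ZMod 2) := !![1, 0; 1, 1]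

/-- The polar transform `P_n = P^{⊗n}`, the n-fold Kronecker power of `Pmat`. -/
def polarP : (n : ℕ) → Matrix (Fin (2 ^ n)) (Fin (2 ^ n)) (ZMod 2)
  | 0 => 1
  | n + 1 =>
    Matrix.reindex (finProdFinEquiv.trans (finCongr (by ring)))
      (finProdFinEquiv.trans (finCongr (by ring)))
      (Matrix.kroneckerMap (· * ·) Pmat (polarP n))

/-- The N×N upper-triangular Toeplitz convolutional precoding matrix:
`G i j = g (j - i)` when `0 ≤ j - i ≤ m`, else `0`. -/
def toeplitzG (N m : ℕ) (g : ℕ → ZMod 2) : Matrix (Fin N) (Fin N) (ZMod 2) :=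
  Matrix.of fun i j => if i.val ≤ j.val ∧ j.val - i.val ≤ m then g (j.val - i.val) else 0

open Finset

/-! ### Auxiliary lemmas -/

lemma hammingNorm_card_filter {ι α : Type*} [Fintype ι] [DecidableEq α] [Zero α]
    (f : ι → α) : hammingNorm f = ∑ i, if f i ≠ 0 then 1 else 0 := by
  rw [hammingNorm, Finset.card_filter]

lemma hammingNorm_comp_equiv {ι κ α : Type*} [Fintype ι] [Fintype κ] [DecidableEq α] [Zero α]
    (f : κ → α) (e : ι ≃ κ) : hammingNorm (f ∘ e) = hammingNorm f := by
  rw [hammingNorm_card_filter, hammingNorm_card_filter]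
  exact Fintype.sum_equiv e _ _ (fun i => rfl)

lemma hammingNorm_prod {N : ℕ} (f : Fin 2 × Fin N → ZMod 2) :
    hammingNorm f = hammingNorm (fun j => f (0, j)) + hammingNorm (fun j => f (1, j)) := by
  rw [hammingNorm_card_filter, hammingNorm_card_filter, hammingNorm_card_filter,
    Fintype.sum_prod_type, Fin.sum_univ_two]

lemma hammingNorm_le_add {ι : Type*} [Fintype ι] (x y : ι → ZMod 2) :
    hammingNorm x ≤ hammingNorm (x + y) + hammingNorm y := by
  have := hammingDist_triangle x y (0 : ι → ZMod 2)
  rw [hammingDist_zero_right, hammingDist_eq_hammingNorm] at this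
  have hxy : x - y = x + y := by
    funext i; simp [sub_eq_add_neg, CharTwo.neg_eq]
  rw [hammingDist_zero_right, show -x + y = x + y by funext i; simp [CharTwo.neg_eq]] at this
  exact this

/-- Key inequality: the weight of `v ᵥ* P_n` is at least the weight of the row of `P_n`
at the minimal index of the support of `v`. -/
lemma polar_wt_ge : ∀ (n : ℕ) (v : Fin (2 ^ n) → ZMod 2) (i0 : Fin (2 ^ n)),
    v i0 ≠ 0 → (∀ j, v j ≠ 0 → i0 ≤ j) →
    hammingNorm (polarP n i0) ≤ hammingNorm (v ᵥ* polarP n) := by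
  intro n
  induction n with
  | zero =>
    intro v i0 h0 _
    rw [polarP, vecMul_one]
    have hrow : (1 : Matrix (Fin (2 ^ 0)) (Fin (2 ^ 0)) (ZMod 2)) i0 = fun _ => 1 := by
      funext j
      have : i0 = j := by
        apply Fin.ext
        have h1 := i0.isLt; have h2 := j.isLt
        norm_num at h1 h2; omega
      simp [this, Matrix.one_apply]
    rw [hrow]
    have h1 : hammingNorm (fun _ : Fin (2 ^ 0) => (1 : ZMod 2)) = 1 := by
      simp [hammingNorm_card_filter]
    rw [h1]
    rw [Nat.one_le_iff_ne_zero, hammingNorm_ne_zero_iff]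
    intro hv; exact h0 (by rw [hv]; rfl)
  | succ n ih =>
    intro v i0 h0 hmin
    set e : (Fin 2 × Fin (2 ^ n)) ≃ Fin (2 ^ (n + 1)) :=
      finProdFinEquiv.trans (finCongr (by ring)) with he
    set K := Matrix.kroneckerMap (· * ·) Pmat (polarP n) with hK
    have hP : polarP (n + 1) = Matrix.reindex e e K := by rw [polarP]
    have hval : ∀ (a : Fin 2) (b : Fin (2 ^ n)), ((e (a, b)) : ℕ) = b + 2 ^ n * a := by
      intro a b; simp [he, finProdFinEquiv]
    -- row identity
    obtain ⟨⟨a, b⟩, hi0⟩ : ∃ p, e p = i0 := ⟨e.symm i0, e.apply_symm_apply i0⟩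
    have hrow : (polarP (n + 1) i0) ∘ e = K (a, b) := by
      funext x
      simp [hP, Matrix.reindex_apply, Matrix.submatrix_apply, ← hi0]
    have hrowN : hammingNorm (polarP (n + 1) i0) = hammingNorm (K (a, b)) := by
      rw [← hrow, hammingNorm_comp_equiv]
    -- vecMul identity
    have hvm : v ᵥ* polarP (n + 1) = ((v ∘ e) ᵥ* K) ∘ e.symm := by
      rw [hP, Matrix.reindex_apply, submatrix_vecMul_equiv, Equiv.symm_symm]
    have hvmN : hammingNorm (v ᵥ* polarP (n + 1)) = hammingNorm ((v ∘ e) ᵥ* K) := by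
      rw [hvm, hammingNorm_comp_equiv]
    set v0 : Fin (2 ^ n) → ZMod 2 := fun j => v (e (0, j)) with hv0
    set v1 : Fin (2 ^ n) → ZMod 2 := fun j => v (e (1, j)) with hv1
    have hc0 : (fun j => ((v ∘ e) ᵥ* K) (0, j)) = (v0 + v1) ᵥ* polarP n := by
      funext j
      simp only [Matrix.vecMul, dotProduct, Fintype.sum_prod_type, Fin.sum_univ_two,
        hK, Matrix.kroneckerMap_apply, Function.comp, Pi.add_apply, hv0, hv1]
      rw [← Finset.sum_add_distrib]
      apply Finset.sum_congr rfl
      intro x _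
      have p0 : Pmat 0 0 = 1 := by simp [Pmat]
      have p1 : Pmat 1 0 = 1 := by simp [Pmat]
      rw [p0, p1]; ring
    have hc1 : (fun j => ((v ∘ e) ᵥ* K) (1, j)) = v1 ᵥ* polarP n := by
      funext j
      simp only [Matrix.vecMul, dotProduct, Fintype.sum_prod_type, Fin.sum_univ_two,
        hK, Matrix.kroneckerMap_apply, Function.comp, hv1]
      have p0 : Pmat 0 1 = 0 := by simp [Pmat]
      have p1 : Pmat 1 1 = 1 := by simp [Pmat]
      rw [show (∑ x, v (e (0, x)) * (Pmat 0 1 * polarP n x j)) = 0 by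
        apply Finset.sum_eq_zero; intro x _; rw [p0]; ring]
      rw [zero_add]
      apply Finset.sum_congr rfl
      intro x _
      rw [p1]; ring
    rw [hrowN, hvmN, hammingNorm_prod ((v ∘ e) ᵥ* K), hammingNorm_prod (K (a, b)), hc0, hc1]
    have ha : a = 0 ∨ a = 1 := by omega
    rcases ha with rfl | rfl
    · -- a = 0
      have hK0 : (fun j => K (0, b) (0, j)) = polarP n b := by
        funext j; simp [hK, Matrix.kroneckerMap_apply, Pmat]
      have hK1 : (fun j => K (0, b) (1, j)) = fun _ => (0 : ZMod 2) := by
        funext j; simp [hK, Matrix.kroneckerMap_apply, Pmat]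
      rw [hK0, hK1]
      have hz : hammingNorm (fun _ : Fin (2 ^ n) => (0 : ZMod 2)) = 0 := by
        simp [hammingNorm_card_filter]
      rw [hz, Nat.add_zero]
      have ihv0 : hammingNorm (polarP n b) ≤ hammingNorm (v0 ᵥ* polarP n) := by
        apply ih v0 b
        · rw [hv0]; simpa [hi0] using h0
        · intro j hj
          have := hmin _ hj
          rw [← hi0, Fin.le_def, hval, hval] at this
          simpa using this
      calc hammingNorm (polarP n b) ≤ hammingNorm (v0 ᵥ* polarP n) := ihv0
        _ ≤ hammingNorm (v0 ᵥ* polarP n + v1 ᵥ* polarP n) + hammingNorm (v1 ᵥ* polarP n) :=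
            hammingNorm_le_add _ _
        _ = hammingNorm ((v0 + v1) ᵥ* polarP n) + hammingNorm (v1 ᵥ* polarP n) := by
            rw [add_vecMul]
    · -- a = 1
      have hK0 : (fun j => K (1, b) (0, j)) = polarP n b := by
        funext j; simp [hK, Matrix.kroneckerMap_apply, Pmat]
      have hK1 : (fun j => K (1, b) (1, j)) = polarP n b := by
        funext j; simp [hK, Matrix.kroneckerMap_apply, Pmat]
      rw [hK0, hK1]
      have hv0z : v0 = 0 := by
        funext j
        by_contra hj
        have := hmin _ hj
        rw [← hi0, Fin.le_def, hval, hval] at this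
        simp at this
        omega
      have ihv1 : hammingNorm (polarP n b) ≤ hammingNorm (v1 ᵥ* polarP n) := by
        apply ih v1 b
        · rw [hv1]; simpa [hi0] using h0
        · intro j hj
          have := hmin _ hj
          rw [← hi0, Fin.le_def, hval, hval] at this
          simpa using this
      rw [hv0z, zero_add]
      exact Nat.add_le_add ihv1 ihv1

lemma toeplitzG_apply {N m : ℕ} {g : ℕ → ZMod 2} (i j : Fin N) :
    toeplitzG N m g i j = if i.val ≤ j.val ∧ j.val - i.val ≤ m then g (j.val - i.val) else 0 :=
  rfl

lemma exists_min_supp {N : ℕ} (v : Fin N → ZMod 2) (hv : v ≠ 0) :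
    ∃ i0, v i0 ≠ 0 ∧ ∀ j, v j ≠ 0 → i0 ≤ j := by
  have hne : (univ.filter fun i => v i ≠ 0).Nonempty := by
    rcases Function.ne_iff.mp hv with ⟨i, hi⟩
    exact ⟨i, by simp; exact hi⟩
  refine ⟨(univ.filter fun i => v i ≠ 0).min' hne, ?_, ?_⟩
  · have := Finset.min'_mem _ hne
    simp at this; exact this
  · intro j hj
    exact Finset.min'_le _ _ (by simp [hj])

section Toep
variable {N m : ℕ} {g : ℕ → ZMod 2}

lemma toeplitz_min_val (hg : g 0 = 1) {v : Fin N → ZMod 2} {i0 : Fin N}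
    (hmin : ∀ j, v j ≠ 0 → i0 ≤ j) :
    (v ᵥ* toeplitzG N m g) i0 = v i0 := by
  show (∑ i, v i * toeplitzG N m g i i0) = v i0
  rw [Finset.sum_eq_single i0]
  · simp [toeplitzG_apply, hg]
  · intro i _ hne
    rcases lt_or_gt_of_ne hne with hlt | hgt
    · have hvi : v i = 0 := by
        by_contra h
        exact absurd (hmin i h) (not_le.mpr hlt)
      rw [hvi, zero_mul]
    · have hgt' : i0.val < i.val := hgt
      have hcond : ¬ (i.val ≤ i0.val ∧ i0.val - i.val ≤ m) := by omega
      rw [toeplitzG_apply, if_neg hcond, mul_zero]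
  · intro h; exact absurd (Finset.mem_univ i0) h

lemma toeplitz_zero_below {v : Fin N → ZMod 2} {i0 : Fin N}
    (hmin : ∀ j, v j ≠ 0 → i0 ≤ j) {j : Fin N} (hj : j < i0) :
    (v ᵥ* toeplitzG N m g) j = 0 := by
  show (∑ i, v i * toeplitzG N m g i j) = 0
  apply Finset.sum_eq_zero
  intro i _
  by_cases hvi : v i = 0
  · rw [hvi, zero_mul]
  · have h1 : i0.val ≤ i.val := hmin i hvi
    have h2 : j.val < i0.val := hj
    have hcond : ¬ (i.val ≤ j.val ∧ j.val - i.val ≤ m) := by omega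
    rw [toeplitzG_apply, if_neg hcond, mul_zero]

lemma toeplitz_surj (hg : g 0 = 1) :
    Function.Surjective (fun v : Fin N → ZMod 2 => v ᵥ* toeplitzG N m g) := by
  rw [← Finite.injective_iff_surjective]
  intro u u' h
  have h' : u ᵥ* toeplitzG N m g = u' ᵥ* toeplitzG N m g := h
  by_contra hne
  have hsub : u - u' ≠ 0 := sub_ne_zero.mpr hne
  obtain ⟨i0, h0, hmin⟩ := exists_min_supp _ hsub
  have hz : ((u - u') ᵥ* toeplitzG N m g) i0 = 0 := by
    rw [sub_vecMul, h', sub_self]; rfl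
  rw [toeplitz_min_val hg hmin] at hz
  exact h0 hz

end Toep

/-- (Corollary 2) If for every minimum-weight information index `i ∈ ℳ` there is
no frozen index `j ∈ 𝒜ᶜ` with `j > i`, then the polar code and the PAC code have
the same number of minimum-weight codewords. -/
theorem pac_same_Admin (n m : ℕ) (g : ℕ → ZMod 2) (hg : g 0 = 1)
    (A : Finset (Fin (2 ^ n))) (hA : A.Nonempty) (wmin : ℕ)
    (hwmin : wmin = (A.image fun j => hammingNorm (polarP n j)).min' (hA.image _))
    (hM : ∀ i ∈ A, hammingNorm (polarP n i) = wmin →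
      ∀ j : Fin (2 ^ n), i < j → j ∈ A) :
    (((Finset.univ.filter fun v : Fin (2 ^ n) → ZMod 2 =>
        ∀ i : Fin (2 ^ n), v i ≠ 0 → i ∈ A).image fun v => v ᵥ* polarP n).filter
          fun c => hammingNorm c = wmin).card =
    (((Finset.univ.filter fun v : Fin (2 ^ n) → ZMod 2 =>
        ∀ i : Fin (2 ^ n), v i ≠ 0 → i ∈ A).image
          fun v => (v ᵥ* toeplitzG (2 ^ n) m g) ᵥ* polarP n).filter
            fun c => hammingNorm c = wmin).card := by
  have hwle : ∀ i ∈ A, wmin ≤ hammingNorm (polarP n i) := by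
    intro i hi
    rw [hwmin]
    exact Finset.min'_le _ _ (Finset.mem_image_of_mem _ hi)
  have hsupp : ∀ (u : Fin (2 ^ n) → ZMod 2) (i0 : Fin (2 ^ n)), u i0 ≠ 0 →
      (∀ j, u j ≠ 0 → i0 ≤ j) → i0 ∈ A → hammingNorm (polarP n i0) = wmin →
      ∀ j, u j ≠ 0 → j ∈ A := by
    intro u i0 hu0 hmin hi0A heq j hj
    rcases eq_or_lt_of_le (hmin j hj) with h | h
    · exact h ▸ hi0A
    · exact hM i0 hi0A heq j h
  congr 1
  ext c
  simp only [Finset.mem_filter, Finset.mem_image, Finset.mem_univ, true_and]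
  constructor
  · rintro ⟨⟨v, hvA, rfl⟩, hwc⟩
    refine ⟨?_, hwc⟩
    by_cases hv : v = 0
    · refine ⟨0, fun i hi => absurd rfl hi, ?_⟩
      simp [hv, Matrix.zero_vecMul]
    · obtain ⟨u, hu⟩ := toeplitz_surj (N := 2 ^ n) (m := m) hg v
      have hu' : u ᵥ* toeplitzG (2 ^ n) m g = v := hu
      have hune : u ≠ 0 := by
        intro h0; apply hv; rw [← hu', h0, zero_vecMul]
      obtain ⟨i1, hui1, humin⟩ := exists_min_supp u hune
      have hv1 : v i1 ≠ 0 := by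
        rw [← hu', toeplitz_min_val hg humin]; exact hui1
      have hvmin : ∀ j, v j ≠ 0 → i1 ≤ j := by
        intro j hj; by_contra hle; rw [not_le] at hle
        exact hj (by rw [← hu']; exact toeplitz_zero_below humin hle)
      have hi1A : i1 ∈ A := hvA i1 hv1
      have hge := polar_wt_ge n v i1 hv1 hvmin
      rw [hwc] at hge
      have heq := le_antisymm hge (hwle i1 hi1A)
      exact ⟨u, hsupp u i1 hui1 humin hi1A heq, by rw [hu']⟩
  · rintro ⟨⟨v, hvA, rfl⟩, hwc⟩
    refine ⟨?_, hwc⟩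
    by_cases hv : v = 0
    · refine ⟨0, fun i hi => absurd rfl hi, ?_⟩
      simp [hv, Matrix.zero_vecMul]
    · obtain ⟨i0, hv0, hvmin⟩ := exists_min_supp v hv
      set u := v ᵥ* toeplitzG (2 ^ n) m g with hu
      have hu0 : u i0 ≠ 0 := by
        rw [hu, toeplitz_min_val hg hvmin]; exact hv0
      have humin : ∀ j, u j ≠ 0 → i0 ≤ j := by
        intro j hj; by_contra hle; rw [not_le] at hle
        exact hj (toeplitz_zero_below hvmin hle)
      have hi0A : i0 ∈ A := hvA i0 hv0
      have hge := polar_wt_ge n u i0 hu0 humin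
      rw [hwc] at hge
      have heq := le_antisymm hge (hwle i0 hi0A)
      exact ⟨u, hsupp u i0 hu0 humin hi0A heq, rfl⟩
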